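/- For all integers n ≥ 2 and 1 ≤ j ≤ n, 1 ≤ Γ(j + 1 + 2/(n−1)) / Γ(j+1) ≤ 1 + 25·ln(j+1)/n. Moreover, for all integers n ≥ 10, Γ(n + 1 + 2/(n−1)) / Γ(n+1) ≤ 1 + 4·ln(n)/n. -/

import Mathlib

lemma aux_exp_le (t : ℝ) : Real.exp t ≤ 1 + t * Real.exp t := by
  have h1 : (-t + 1) * Real.exp t ≤ Real.exp (-t) * Real.exp t :=
    mul_le_mul_of_nonneg_right (Real.add_one_le_exp _) (Real.exp_pos t).le
  rw [← Real.exp_add, neg_add_cancel, Real.exp_zero] at h1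
  nlinarith

lemma aux_gautschi {x s : ℝ} (hx : 1 ≤ x) (hs0 : 0 ≤ s) (hs1 : s ≤ 1) :
    Real.Gamma (x + s) ≤ Real.Gamma x * Real.exp (s * Real.log x) := by
  have hx0 : 0 < x := by linarith
  have hG : 0 < Real.Gamma x := Real.Gamma_pos_of_pos hx0
  have hGs : 0 < Real.Gamma (x + s) := Real.Gamma_pos_of_pos (by linarith)
  have hc := Real.convexOn_log_Gamma.2 (Set.mem_Ioi.mpr hx0)
    (Set.mem_Ioi.mpr (by linarith : (0:ℝ) < x + 1)) (by linarith : (0:ℝ) ≤ 1 - s) hs0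
    (by ring)
  simp only [smul_eq_mul, Function.comp_apply] at hc
  rw [show (1 - s) * x + s * (x + 1) = x + s by ring] at hc
  rw [Real.Gamma_add_one (ne_of_gt hx0), Real.log_mul (ne_of_gt hx0) (ne_of_gt hG)] at hc
  calc Real.Gamma (x + s) = Real.exp (Real.log (Real.Gamma (x + s))) := (Real.exp_log hGs).symm
    _ ≤ Real.exp ((1 - s) * Real.log (Real.Gamma x)
          + s * (Real.log x + Real.log (Real.Gamma x))) := Real.exp_le_exp.2 hc
    _ = Real.Gamma x * Real.exp (s * Real.log x) := by
        rw [show (1 - s) * Real.log (Real.Gamma x)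
            + s * (Real.log x + Real.log (Real.Gamma x))
            = Real.log (Real.Gamma x) + s * Real.log x by ring, Real.exp_add,
          Real.exp_log hG]

lemma aux_ratio {x s B : ℝ} (hx : 1 ≤ x) (hs0 : 0 ≤ s) (hs1 : s ≤ 1)
    (hB : Real.exp (s * Real.log x) ≤ B) :
    Real.Gamma (x + s) / Real.Gamma x ≤ 1 + B * (s * Real.log x) := by
  have hx0 : 0 < x := by linarith
  have hG : 0 < Real.Gamma x := Real.Gamma_pos_of_pos hx0
  have ht : 0 ≤ s * Real.log x := mul_nonneg hs0 (Real.log_nonneg hx)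
  have h2 := aux_exp_le (s * Real.log x)
  rw [div_le_iff₀ hG]
  calc Real.Gamma (x + s) ≤ Real.Gamma x * Real.exp (s * Real.log x) :=
        aux_gautschi hx hs0 hs1
    _ ≤ Real.Gamma x * (1 + B * (s * Real.log x)) := by
        apply mul_le_mul_of_nonneg_left _ hG.le
        nlinarith [Real.exp_pos (s * Real.log x)]
    _ = (1 + B * (s * Real.log x)) * Real.Gamma x := by ring

lemma aux_lower {x s : ℝ} (hx : 2 ≤ x) (hs : 0 < s) :
    1 ≤ Real.Gamma (x + s) / Real.Gamma x := by
  have hG : 0 < Real.Gamma x := Real.Gamma_pos_of_pos (by linarith)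
  rw [le_div_iff₀ hG, one_mul]
  exact (Real.Gamma_strictMonoOn_Ici (Set.mem_Ici.mpr hx)
    (Set.mem_Ici.mpr (by linarith)) (by linarith)).le

lemma aux_pow' : ∀ m : ℕ, m + 4 ≤ 2 ^ (m + 2) := by
  intro m
  induction m with
  | zero => norm_num
  | succ k ih => rw [pow_succ]; omega

lemma aux_log_step (y : ℝ) (hy : 0 < y) : Real.log (y + 1) ≤ Real.log y + 1 / y := by
  have h := Real.log_le_sub_one_of_pos (show (0:ℝ) < (y + 1) / y by positivity)
  rw [Real.log_div (by positivity) (by positivity)] at h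
  have e : (y + 1) / y - 1 = 1 / y := by field_simp; ring
  linarith [e ▸ h]

lemma aux_exp54 : Real.exp (27 / 50) ≤ 43 / 25 := by
  have h : Real.exp (27 / 50) ^ 50 ≤ (43 / 25 : ℝ) ^ 50 := by
    rw [← Real.exp_nat_mul, show ((50 : ℕ) : ℝ) * (27 / 50) = ((27 : ℕ) : ℝ) by norm_num,
      show ((27 : ℕ) : ℝ) = ((27 : ℕ) : ℝ) * 1 by ring, Real.exp_nat_mul]
    exact (pow_le_pow_left₀ (Real.exp_pos 1).le Real.exp_one_lt_d9.le 27).trans (by norm_num)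
  exact le_of_pow_le_pow_left₀ (by norm_num) (by norm_num) h

lemma aux_exp23 : Real.exp (23 / 10) ≤ 10 := by
  have h : Real.exp (23 / 10) ^ 10 ≤ (10 : ℝ) ^ 10 := by
    rw [← Real.exp_nat_mul, show ((10 : ℕ) : ℝ) * (23 / 10) = ((23 : ℕ) : ℝ) by norm_num,
      show ((23 : ℕ) : ℝ) = ((23 : ℕ) : ℝ) * 1 by ring, Real.exp_nat_mul]
    exact (pow_le_pow_left₀ (Real.exp_pos 1).le Real.exp_one_lt_d9.le 23).trans (by norm_num)
  exact le_of_pow_le_pow_left₀ (by norm_num) (by norm_num) h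

lemma aux_log10 : (23 / 10 : ℝ) ≤ Real.log 10 :=
  (Real.le_log_iff_exp_le (by norm_num)).mpr aux_exp23

lemma aux_log11 : Real.log 11 ≤ 243 / 100 := by
  rw [Real.log_le_iff_le_exp (by norm_num)]
  have h43 : (1.1075 : ℝ) ^ 4 ≤ Real.exp 0.43 := by
    rw [show (0.43 : ℝ) = (4 : ℕ) * 0.1075 by norm_num, Real.exp_nat_mul]
    exact pow_le_pow_left₀ (by norm_num)
      (by nlinarith [Real.add_one_le_exp (0.1075 : ℝ)]) 4
  have he : (2.7182818283 : ℝ) ^ 2 ≤ Real.exp 1 ^ 2 :=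
    pow_le_pow_left₀ (by norm_num) Real.exp_one_gt_d9.le 2
  calc (11 : ℝ) ≤ 2.7182818283 ^ 2 * 1.1075 ^ 4 := by norm_num
    _ ≤ Real.exp 1 ^ 2 * Real.exp 0.43 :=
        mul_le_mul he h43 (by positivity) (by positivity)
    _ = Real.exp (243 / 100) := by
        rw [← Real.exp_nat_mul, ← Real.exp_add]; norm_num

lemma aux_log_lin : ∀ n : ℕ, 10 ≤ n → Real.log ((n : ℝ) + 1) ≤ 27 * ((n : ℝ) - 1) / 100 := by
  intro n hn
  induction n, hn using Nat.le_induction with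
  | base =>
    norm_num
    exact aux_log11.trans (by norm_num)
  | succ n hn ih =>
    have hn' : (10 : ℝ) ≤ (n : ℝ) := by exact_mod_cast hn
    have hstep := aux_log_step ((n : ℝ) + 1) (by linarith)
    have hinv : 1 / ((n : ℝ) + 1) ≤ 27 / 100 := by
      rw [div_le_div_iff₀ (by linarith) (by norm_num)]; linarith
    push_cast
    linarith

lemma aux_log3 : (1 : ℝ) ≤ Real.log 3 := by
  rw [Real.le_log_iff_exp_le (by norm_num)]
  calc Real.exp 1 ≤ 2.7182818286 := Real.exp_one_lt_d9.le
    _ ≤ 3 := by norm_num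

theorem stmt16 :
    (∀ n j : ℕ, 2 ≤ n → 1 ≤ j → j ≤ n →
      1 ≤ Real.Gamma ((j : ℝ) + 1 + 2 / ((n : ℝ) - 1)) / Real.Gamma ((j : ℝ) + 1)
      ∧ Real.Gamma ((j : ℝ) + 1 + 2 / ((n : ℝ) - 1)) / Real.Gamma ((j : ℝ) + 1)
          ≤ 1 + 25 * Real.log ((j : ℝ) + 1) / n)
    ∧ ∀ n : ℕ, 10 ≤ n →
        Real.Gamma ((n : ℝ) + 1 + 2 / ((n : ℝ) - 1)) / Real.Gamma ((n : ℝ) + 1)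
          ≤ 1 + 4 * Real.log n / n := by
  constructor
  · intro n j hn hj1 hjn
    have hNj : (1 : ℝ) ≤ (j : ℝ) := by exact_mod_cast hj1
    have hjN : (j : ℝ) ≤ (n : ℝ) := by exact_mod_cast hjn
    have hN2 : (2 : ℝ) ≤ (n : ℝ) := by exact_mod_cast hn
    have hs0 : (0 : ℝ) < 2 / ((n : ℝ) - 1) := by
      apply div_pos (by norm_num); linarith
    constructor
    · exact aux_lower (by linarith) hs0
    · rcases Nat.lt_or_ge n 3 with h2 | h3
      · -- n = 2
        have hn2 : n = 2 := by omega
        subst hn2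
        have hj2 : j ≤ 2 := hjn
        have hlog2 : (0.6931471803 : ℝ) ≤ Real.log 2 := Real.log_two_gt_d9.le
        have g2 : Real.Gamma 2 = 1 := Real.Gamma_two
        have g3 : Real.Gamma 3 = 2 := by
          rw [show (3 : ℝ) = ((2 : ℕ) : ℝ) + 1 by norm_num, Real.Gamma_nat_eq_factorial]
          norm_num [Nat.factorial]
        have g4 : Real.Gamma 4 = 6 := by
          rw [show (4 : ℝ) = ((3 : ℕ) : ℝ) + 1 by norm_num, Real.Gamma_nat_eq_factorial]
          norm_num [Nat.factorial]
        have g5 : Real.Gamma 5 = 24 := by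
          rw [show (5 : ℝ) = ((4 : ℕ) : ℝ) + 1 by norm_num, Real.Gamma_nat_eq_factorial]
          norm_num [Nat.factorial]
        interval_cases j
        · rw [show ((1 : ℕ) : ℝ) + 1 + 2 / (((2 : ℕ) : ℝ) - 1) = 4 by norm_num,
            show ((1 : ℕ) : ℝ) + 1 = 2 by norm_num, g4, g2]
          push_cast
          nlinarith
        · rw [show ((2 : ℕ) : ℝ) + 1 + 2 / (((2 : ℕ) : ℝ) - 1) = 5 by norm_num,
            show ((2 : ℕ) : ℝ) + 1 = 3 by norm_num, g5, g3]
          push_cast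
          nlinarith [aux_log3]
      · -- n ≥ 3
        have hN3 : (3 : ℝ) ≤ (n : ℝ) := by exact_mod_cast h3
        have h1 : (0 : ℝ) < (n : ℝ) - 1 := by linarith
        have hs1 : 2 / ((n : ℝ) - 1) ≤ 1 := by
          rw [div_le_one h1]; linarith
        have hx1 : (1 : ℝ) ≤ (j : ℝ) + 1 := by linarith
        -- log (j+1) ≤ log (n+1) ≤ (n-1) * log 2
        have hp : (n : ℝ) + 1 ≤ 2 ^ (n - 1) := by
          have h := aux_pow' (n - 3)
          rw [show n - 3 + 4 = n + 1 by omega, show n - 3 + 2 = n - 1 by omega] at h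
          exact_mod_cast h
        have hlogN : Real.log ((n : ℝ) + 1) ≤ ((n : ℝ) - 1) * Real.log 2 := by
          calc Real.log ((n : ℝ) + 1) ≤ Real.log (2 ^ (n - 1)) :=
                Real.log_le_log (by linarith) hp
            _ = ((n - 1 : ℕ) : ℝ) * Real.log 2 := Real.log_pow _ _
            _ = ((n : ℝ) - 1) * Real.log 2 := by
                congr 1
                have : 1 ≤ n := by omega
                push_cast [Nat.cast_sub this]
                ring
        have hB : Real.exp (2 / ((n : ℝ) - 1) * Real.log ((j : ℝ) + 1)) ≤ 4 := by
          have ht : 2 / ((n : ℝ) - 1) * Real.log ((j : ℝ) + 1) ≤ 2 * Real.log 2 := by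
            have hmono : Real.log ((j : ℝ) + 1) ≤ Real.log ((n : ℝ) + 1) :=
              Real.log_le_log (by linarith) (by linarith)
            have h' : Real.log ((j : ℝ) + 1) ≤ ((n : ℝ) - 1) * Real.log 2 :=
              hmono.trans hlogN
            have hl2 : (0 : ℝ) ≤ Real.log 2 := Real.log_nonneg (by norm_num)
            rw [div_mul_eq_mul_div, div_le_iff₀ h1]
            nlinarith
          calc Real.exp (2 / ((n : ℝ) - 1) * Real.log ((j : ℝ) + 1))
              ≤ Real.exp (2 * Real.log 2) := Real.exp_le_exp.2 ht
            _ = 4 := by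
                rw [show (2 : ℝ) * Real.log 2 = Real.log (2 ^ (2 : ℕ)) by
                    rw [Real.log_pow]; norm_num]
                rw [Real.exp_log (by norm_num)]
                norm_num
        have hmain := aux_ratio hx1 hs0.le hs1 hB
        apply hmain.trans
        have hLx : 0 ≤ Real.log ((j : ℝ) + 1) := Real.log_nonneg (by linarith)
        have key : 4 * (2 / ((n : ℝ) - 1) * Real.log ((j : ℝ) + 1))
            ≤ 25 * Real.log ((j : ℝ) + 1) / (n : ℝ) := by
          rw [show 4 * (2 / ((n : ℝ) - 1) * Real.log ((j : ℝ) + 1))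
              = 8 * Real.log ((j : ℝ) + 1) / ((n : ℝ) - 1) by ring]
          rw [div_le_div_iff₀ h1 (by linarith)]
          nlinarith [mul_nonneg hLx (show (0 : ℝ) ≤ 17 * (n : ℝ) - 25 by linarith)]
        linarith
  · intro n hn
    have hN : (10 : ℝ) ≤ (n : ℝ) := by exact_mod_cast hn
    have h1 : (0 : ℝ) < (n : ℝ) - 1 := by linarith
    have hs0 : (0 : ℝ) < 2 / ((n : ℝ) - 1) := div_pos (by norm_num) h1
    have hs1 : 2 / ((n : ℝ) - 1) ≤ 1 := by rw [div_le_one h1]; linarith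
    have hx1 : (1 : ℝ) ≤ (n : ℝ) + 1 := by linarith
    have hll := aux_log_lin n hn
    have hB : Real.exp (2 / ((n : ℝ) - 1) * Real.log ((n : ℝ) + 1)) ≤ 43 / 25 := by
      refine le_trans (Real.exp_le_exp.2 ?_) aux_exp54
      rw [div_mul_eq_mul_div, div_le_iff₀ h1]
      linarith
    have hmain := aux_ratio hx1 hs0.le hs1 hB
    apply hmain.trans
    have hLog10 : (23 / 10 : ℝ) ≤ Real.log (n : ℝ) :=
      aux_log10.trans (Real.log_le_log (by norm_num) hN)
    have hstep : Real.log ((n : ℝ) + 1) ≤ Real.log (n : ℝ) + 1 / (n : ℝ) :=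
      aux_log_step (n : ℝ) (by linarith)
    have key : 43 / 25 * (2 / ((n : ℝ) - 1) * Real.log ((n : ℝ) + 1))
        ≤ 4 * Real.log (n : ℝ) / (n : ℝ) := by
      rw [show 43 / 25 * (2 / ((n : ℝ) - 1) * Real.log ((n : ℝ) + 1))
          = 86 / 25 * Real.log ((n : ℝ) + 1) / ((n : ℝ) - 1) by ring]
      rw [div_le_div_iff₀ h1 (by linarith)]
      have hNn0 : (n : ℝ) ≠ 0 := by linarith
      have h2 : Real.log ((n : ℝ) + 1) * (n : ℝ) ≤ Real.log (n : ℝ) * (n : ℝ) + 1 := by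
        have h := mul_le_mul_of_nonneg_right hstep (show (0 : ℝ) ≤ (n : ℝ) by linarith)
        have e : (Real.log (n : ℝ) + 1 / (n : ℝ)) * (n : ℝ)
            = Real.log (n : ℝ) * (n : ℝ) + 1 := by field_simp
        linarith [e ▸ h]
      nlinarith [mul_nonneg (show (0 : ℝ) ≤ 14 * (n : ℝ) - 100 by linarith)
        (show (0 : ℝ) ≤ Real.log (n : ℝ) - 23 / 10 by linarith)]
    linarith
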